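/- For real parameters t, φ, θ, τ, the determinant of the 4×4 matrix whose columns are (cos(t+φ)cos θ, cos(t+φ)sin θ, sin(t+φ)cos θ, sin(t+φ)sin θ), (−cos t sin θ, cos t cos θ, −sin t sin θ, sin t cos θ), (cos τ, sin τ, 0, 0), and (0, 0, cos τ, sin τ) equals (1/2) sin φ · sin(2(θ − τ)). -/

import Mathlib

open Real

/-- The determinant of the 4×4 matrix with columns
`(cos(t+φ)cosθ, cos(t+φ)sinθ, sin(t+φ)cosθ, sin(t+φ)sinθ)`,
`(−cos t sinθ, cos t cosθ, −sin t sinθ, sin t cosθ)`,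
`(cos τ, sin τ, 0, 0)` and `(0, 0, cos τ, sin τ)` equals `(1/2) sin φ sin(2(θ−τ))`. -/
theorem det_formula (t φ θ τ : ℝ) :
    Matrix.det
      !![Real.cos (t + φ) * Real.cos θ, -(Real.cos t * Real.sin θ), Real.cos τ, 0;
         Real.cos (t + φ) * Real.sin θ, Real.cos t * Real.cos θ, Real.sin τ, 0;
         Real.sin (t + φ) * Real.cos θ, -(Real.sin t * Real.sin θ), 0, Real.cos τ;
         Real.sin (t + φ) * Real.sin θ, Real.sin t * Real.cos θ, 0, Real.sin τ] =
      (1 / 2) * Real.sin φ * Real.sin (2 * (θ - τ)) := by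
  simp only [Matrix.det_succ_row_zero, Fin.sum_univ_succ, cos_add, sin_add, sin_sub, cos_sub,
    sin_two_mul, Fin.succAbove, Fin.lt_def, Matrix.cons_val', Matrix.cons_val_zero,
    Matrix.cons_val_one, Matrix.head_cons, Matrix.empty_val', Matrix.cons_val_fin_one,
    Matrix.head_fin_const, Matrix.submatrix_apply, Fin.isValue, Matrix.cons_val_succ,
    Matrix.det_fin_one_of, Fin.val_zero, Fin.val_succ, Matrix.cons_val_zero,
    Finset.univ_unique, Finset.sum_singleton]
  norm_num [Matrix.vecHead, Matrix.vecTail, Matrix.cons_val_two, Fin.castSucc_zero, Fin.castSucc_one]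
  linear_combination (-(sin φ * cos θ^2 * sin τ * cos τ) + sin φ * sin θ * cos θ * cos τ^2 -
    sin φ * sin θ * cos θ * sin τ^2 + sin φ * sin θ^2 * sin τ * cos τ) * sin_sq_add_cos_sq t
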